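/- Let A : ℝⁿ → ℝᵐ be linear, λ > 0, L̃ > 0, and for t ≥ 1 set α_t = 2/(t+1) and γ_t = 4L̃/(t(t+1)). Fix y⁰ ∈ ℝᵐ. Call a point y' AC-SA-reachable from z⁰ relative to points ŷ¹, …, ŷʲ ∈ ℝᵐ if y' = y^m_ag for some m ≥ 0, where y⁰_ag = y⁰_md = z⁰ and for t = 1,…,m: y^t_md = ((1−α_t)(λ+γ_t)/(γ_t + (1−α_t²)λ))·y^{t−1}_ag + (α_t((1−α_t)λ+γ_t)/(γ_t + (1−α_t²)λ))·z^{t−1}; z^t = (α_tλ/(λ+γ_t))·y^t_md + (((1−α_t)λ+γ_t)/(λ+γ_t))·z^{t−1} − (α_t/(λ+γ_t))·(A v^t + λ(y^t_md − y⁰) + λΣ_{l=1}^{j} 2^l(y^t_md − ŷ^l)) for some v^t ∈ ℝⁿ; y^t_ag = α_t z^t + (1−α_t)y^{t−1}_ag. Suppose ŷ⁰ = y⁰ and, for each k ≥ 1, ŷᵏ is obtained from ŷ^{k−1} by finitely many consecutive such AC-SA trajectories relative to ŷ¹, …, ŷ^{k−1} (each trajectory starting where the previous one ended). Then ŷᵏ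 ∈ y⁰ + (Ker Aᵀ)^⊥ for every k ≥ 0. -/

import Mathlib

open Finset

/-- `ACSAReachable A lam Lt y0 yh j z0 y'` means that `y'` is the aggregate iterate `y^m_ag`
of some AC-SA trajectory of some length `m` started at `z0`, applied to the regularized dual
objective built from the base point `y0` and the prox centers `yh 1, …, yh j`; the stochastic
gradient at step `t` has the form `A v^t + λ(y^t_md − y⁰) + λ Σ_{l=1}^j 2^l (y^t_md − ŷ^l)`. -/
def ACSAReachable {n d : ℕ}
    (A : EuclideanSpace ℝ (Fin n) →ₗ[ℝ] EuclideanSpace ℝ (Fin d))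
    (lam Lt : ℝ) (y0 : EuclideanSpace ℝ (Fin d)) (yh : ℕ → EuclideanSpace ℝ (Fin d))
    (j : ℕ) (z0 y' : EuclideanSpace ℝ (Fin d)) : Prop :=
  ∃ (m : ℕ) (ymd z yag : ℕ → EuclideanSpace ℝ (Fin d)) (v : ℕ → EuclideanSpace ℝ (Fin n)),
    ymd 0 = z0 ∧ yag 0 = z0 ∧ z 0 = z0 ∧
    (∀ t < m,
      (fun (αt γt : ℝ) =>
        ymd (t + 1) =
          ((1 - αt) * (lam + γt) / (γt + (1 - αt ^ 2) * lam)) • yag t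
            + (αt * ((1 - αt) * lam + γt) / (γt + (1 - αt ^ 2) * lam)) • z t ∧
        z (t + 1) =
          (αt * lam / (lam + γt)) • ymd (t + 1)
            + (((1 - αt) * lam + γt) / (lam + γt)) • z t
            - (αt / (lam + γt)) •
                (A (v (t + 1)) + lam • (ymd (t + 1) - y0)
                  + lam • ∑ l ∈ Icc 1 j, (2 : ℝ) ^ l • (ymd (t + 1) - yh l)) ∧
        yag (t + 1) = αt • z (t + 1) + (1 - αt) • yag t)
      (2 / ((t : ℝ) + 2)) (4 * Lt / (((t : ℝ) + 1) * ((t : ℝ) + 2)))) ∧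
    y' = yag m

/-- Affine combination of two points in an affine subspace stays in it. -/
lemma affine_mem_aux {E : Type*} [AddCommGroup E] [Module ℝ E] (S : Submodule ℝ E)
    (a b : ℝ) (hab : a + b = 1) (x y y0 : E) (hx : x - y0 ∈ S) (hy : y - y0 ∈ S) :
    a • x + b • y - y0 ∈ S := by
  have h : a • x + b • y - y0 = a • (x - y0) + b • (y - y0) + (a + b - 1) • y0 := by
    module
  rw [hab, sub_self, zero_smul, add_zero] at h
  rw [h]
  exact S.add_mem (S.smul_mem a hx) (S.smul_mem b hy)

lemma acsa_reach_mem {n d : ℕ}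
    (A : EuclideanSpace ℝ (Fin n) →ₗ[ℝ] EuclideanSpace ℝ (Fin d))
    (lam Lt : ℝ) (hlam : 0 < lam) (hLt : 0 < Lt)
    (y0 : EuclideanSpace ℝ (Fin d)) (yh : ℕ → EuclideanSpace ℝ (Fin d)) (j : ℕ)
    (z0 y' : EuclideanSpace ℝ (Fin d))
    (S : Submodule ℝ (EuclideanSpace ℝ (Fin d)))
    (hA : ∀ v, A v ∈ S)
    (hyh : ∀ l, 1 ≤ l → l ≤ j → yh l - y0 ∈ S)
    (hz0 : z0 - y0 ∈ S)
    (h : ACSAReachable A lam Lt y0 yh j z0 y') : y' - y0 ∈ S := by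
  obtain ⟨m, ymd, z, yag, v, hmd0, hag0, hz00, hstep, hy'⟩ := h
  suffices h : ∀ t, t ≤ m → ymd t - y0 ∈ S ∧ z t - y0 ∈ S ∧ yag t - y0 ∈ S by
    rw [hy']; exact (h m le_rfl).2.2
  intro t
  induction t with
  | zero =>
      intro _
      rw [hmd0, hag0, hz00]
      exact ⟨hz0, hz0, hz0⟩
  | succ t ih =>
      intro ht
      obtain ⟨ihmd, ihz, ihag⟩ := ih (le_of_lt (Nat.lt_of_succ_le ht))
      obtain ⟨h1, h2, h3⟩ := hstep t (Nat.lt_of_succ_le ht)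
      set αt : ℝ := 2 / ((t : ℝ) + 2) with hαt
      set γt : ℝ := 4 * Lt / (((t : ℝ) + 1) * ((t : ℝ) + 2)) with hγt
      have ht2 : (0 : ℝ) < (t : ℝ) + 2 := by positivity
      have hγpos : 0 < γt := by rw [hγt]; positivity
      have hα1 : αt ≤ 1 := by
        rw [hαt, div_le_one ht2]
        have : (0 : ℝ) ≤ (t : ℝ) := Nat.cast_nonneg t
        linarith
      have hαpos : 0 < αt := by rw [hαt]; positivity
      have hD : 0 < γt + (1 - αt ^ 2) * lam := by
        have h1α : 0 ≤ 1 - αt ^ 2 := by nlinarith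
        nlinarith
      have hlg : 0 < lam + γt := by linarith
      -- ymd (t+1)
      have hmd : ymd (t + 1) - y0 ∈ S := by
        rw [h1]
        apply affine_mem_aux S _ _ _ _ _ _ ihag ihz
        rw [← add_div, div_eq_one_iff_eq hD.ne']
        ring
      -- z (t+1)
      have hG : A (v (t + 1)) + lam • (ymd (t + 1) - y0)
          + lam • ∑ l ∈ Icc 1 j, (2 : ℝ) ^ l • (ymd (t + 1) - yh l) ∈ S := by
        refine S.add_mem (S.add_mem (hA _) (S.smul_mem _ hmd)) (S.smul_mem _ ?_)
        refine Submodule.sum_mem S fun l hl => ?_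
        simp only [mem_Icc] at hl
        have : ymd (t + 1) - yh l = (ymd (t + 1) - y0) - (yh l - y0) := by abel
        rw [this]
        exact S.smul_mem _ (S.sub_mem hmd (hyh l hl.1 hl.2))
      have hz : z (t + 1) - y0 ∈ S := by
        rw [h2]
        have heq : (αt * lam / (lam + γt)) • ymd (t + 1)
            + (((1 - αt) * lam + γt) / (lam + γt)) • z t
            - (αt / (lam + γt)) •
              (A (v (t + 1)) + lam • (ymd (t + 1) - y0)
                + lam • ∑ l ∈ Icc 1 j, (2 : ℝ) ^ l • (ymd (t + 1) - yh l)) - y0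
            = ((αt * lam / (lam + γt)) • ymd (t + 1)
                + (((1 - αt) * lam + γt) / (lam + γt)) • z t - y0)
              - (αt / (lam + γt)) •
                (A (v (t + 1)) + lam • (ymd (t + 1) - y0)
                  + lam • ∑ l ∈ Icc 1 j, (2 : ℝ) ^ l • (ymd (t + 1) - yh l)) := by
          abel
        rw [heq]
        refine S.sub_mem ?_ (S.smul_mem _ hG)
        apply affine_mem_aux S _ _ _ _ _ _ hmd ihz
        field_simp
        ring
      have hag : yag (t + 1) - y0 ∈ S := by
        rw [h3]
        exact affine_mem_aux S _ _ (by ring) _ _ _ hz ihag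
      exact ⟨hmd, hz, hag⟩

/-- Corollary 5.5: the points `ŷᵏ` produced by the RRMA-AC-SA² meta-algorithm — each obtained
from the previous one by finitely many consecutive AC-SA trajectories relative to the prox
centers `ŷ¹,…,ŷ^{k-1}` — all lie in the affine subspace `y⁰ + (Ker Aᵀ)^⊥`. -/
theorem rrma_ac_sa_iterates_in_affine_subspace {n d : ℕ}
    (A : EuclideanSpace ℝ (Fin n) →ₗ[ℝ] EuclideanSpace ℝ (Fin d))
    (lam Lt : ℝ) (hlam : 0 < lam) (hLt : 0 < Lt)
    (y0 : EuclideanSpace ℝ (Fin d)) (yh : ℕ → EuclideanSpace ℝ (Fin d))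
    (h0 : yh 0 = y0)
    (hstep : ∀ k : ℕ,
      Relation.ReflTransGen (ACSAReachable A lam Lt y0 yh k) (yh k) (yh (k + 1))) :
    ∀ k : ℕ, yh k - y0 ∈ (LinearMap.ker (LinearMap.adjoint A))ᗮ := by
  set S := (LinearMap.ker (LinearMap.adjoint A))ᗮ with hS
  have hA : ∀ v, A v ∈ S := by
    intro v
    rw [hS, Submodule.mem_orthogonal]
    intro u hu
    have h := LinearMap.adjoint_inner_left A v u
    rw [LinearMap.mem_ker.mp hu] at h
    rw [← h, inner_zero_left]
  have key : ∀ k : ℕ, ∀ l ≤ k, yh l - y0 ∈ S := by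
    intro k
    induction k with
    | zero =>
        intro l hl
        interval_cases l
        rw [h0, sub_self]
        exact S.zero_mem
    | succ k ih =>
        intro l hl
        rcases Nat.lt_succ_iff_lt_or_eq.mp (Nat.lt_succ_of_le hl) with h | h
        · exact ih l (Nat.lt_succ_iff.mp h)
        · subst h
          have hk := hstep k
          have : ∀ y, Relation.ReflTransGen (ACSAReachable A lam Lt y0 yh k) (yh k) y →
              y - y0 ∈ S := by
            intro y hy
            induction hy with
            | refl => exact ih k le_rfl
            | tail _ hbc ihc =>
                exact acsa_reach_mem A lam Lt hlam hLt y0 yh k _ _ S hA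
                  (fun l h1 h2 => ih l h2) ihc hbc
          exact this _ hk
  intro k
  exact key k k le_rfl
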